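/- Let (X, d) be a metric space and let f : X × ℝ^N → ℝ^N be a continuous map (ℝ^N Euclidean) satisfying: (1) for every w ∈ ℝ^N, the map x ↦ f(x, w) is 1-Lipschitz; (2) for every x ∈ X, every continuous map g : ℝ^N → ℝ^N with sup_{w} ‖g(w) − f(x, w)‖ < ∞ attains the value 0 (i.e., there is w with g(w) = 0); (3) there is a function c : (0,∞) → ℝ such that for every r > 0 and every w ∈ ℝ^N, the set {x ∈ X : ‖f(x, w)‖ ≤ r} has diameter at most c(r). Then no expander admits a coarse quasi-embedding into X: there do not exist an expander (X_n), 1-Lipschitz maps ξ_n : X_n → X, and a function ρ as in the definition of coarse quasi-embedding. -/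

import Mathlib

open Classical in
/-- The degree of a vertex `v` in a finite simple graph. -/
noncomputable def gdeg {V : Type*} [Fintype V] (G : SimpleGraph V) (v : V) : ℕ :=
  (Finset.univ.filter fun w => G.Adj v w).card

open Classical in
/-- The boundary `∂A = {x : dist(x, A) = 1}` of a set of vertices `A`: the set of
vertices not in `A` that are adjacent to a vertex of `A`. -/
noncomputable def graphBoundary {V : Type*} [Fintype V] (G : SimpleGraph V)
    (A : Finset V) : Finset V :=
  Finset.univ.filter fun x => x ∉ A ∧ ∃ a ∈ A, G.Adj x a

/-- An expander of degree `d` and conductance `c`: a sequence of finite connected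
`d`-regular graphs whose cardinalities tend to infinity, such that every set `A`
of at most half the vertices satisfies `|∂A| ≥ c·|A|`. -/
structure Expander (d : ℕ) (c : ℝ) where
  V : ℕ → Type
  [fintype : ∀ n, Fintype (V n)]
  G : ∀ n, SimpleGraph (V n)
  connected : ∀ n, (G n).Connected
  regular : ∀ (n : ℕ) (v : V n), gdeg (G n) v = d
  card_tendsto : Filter.Tendsto (fun n => Fintype.card (V n)) Filter.atTop Filter.atTop
  expansion : ∀ (n : ℕ) (A : Finset (V n)),
    (A.card : ℝ) ≤ (Fintype.card (V n) : ℝ) / 2 →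
    c * A.card ≤ ((graphBoundary (G n) A).card : ℝ)

attribute [instance] Expander.fintype

open Classical in
/-- The finset of unordered pairs of distinct vertices. -/
noncomputable def offDiagPairs (V : Type*) [Fintype V] : Finset (Sym2 V) :=
  Finset.univ.filter fun e => ¬ e.IsDiag

/-- The squared distance `‖f x − f y‖²` as a function of the unordered pair `{x, y}`. -/
noncomputable def sqDistFun {V H : Type*} [NormedAddCommGroup H] (f : V → H) :
    Sym2 V → ℝ :=
  Sym2.lift ⟨fun x y => ‖f x - f y‖ ^ 2, fun x y => by show ‖f x - f y‖ ^ 2 = ‖f y - f x‖ ^ 2; rw [norm_sub_rev]⟩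

/-- `∑_{{x,y} ∈ P} ‖f x − f y‖²`, summed over unordered pairs of distinct vertices. -/
noncomputable def pairSqSum {V : Type*} [Fintype V] {H : Type*} [NormedAddCommGroup H]
    (f : V → H) : ℝ :=
  ∑ e ∈ offDiagPairs V, sqDistFun f e

open Classical in
/-- `∑_{{x,y} ∈ E} ‖f x − f y‖²`, summed over the edges of `G`. -/
noncomputable def edgeSqSum {V : Type*} [Fintype V] (G : SimpleGraph V)
    {H : Type*} [NormedAddCommGroup H] (f : V → H) : ℝ :=
  ∑ e ∈ G.edgeFinset, sqDistFun f e

open Classical in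
/-- The number of edges of a finite simple graph. -/
noncomputable def edgeCount {V : Type*} [Fintype V] (G : SimpleGraph V) : ℕ :=
  G.edgeFinset.card


open Finset MeasureTheory

lemma euclid_abs_coord_le {N : ℕ} (x : EuclideanSpace ℝ (Fin N)) (i : Fin N) : |x i| ≤ ‖x‖ := by
  rw [EuclideanSpace.norm_eq]
  calc |x i| = Real.sqrt (|x i|^2) := (Real.sqrt_sq (abs_nonneg _)).symm
  _ ≤ _ := by
      apply Real.sqrt_le_sqrt
      rw [sq_abs]
      have := Finset.single_le_sum (f := fun j => ‖x j‖^2) (fun j _ => sq_nonneg _) (mem_univ i)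
      simpa [Real.norm_eq_abs, sq_abs] using this

lemma euclid_norm_le_sum_abs {N : ℕ} (x : EuclideanSpace ℝ (Fin N)) : ‖x‖ ≤ ∑ i, |x i| := by
  rw [EuclideanSpace.norm_eq]
  calc Real.sqrt (∑ i, ‖x i‖^2) ≤ Real.sqrt ((∑ i, |x i|)^2) := by
        apply Real.sqrt_le_sqrt
        simpa [Real.norm_eq_abs] using Finset.sum_sq_le_sq_sum_of_nonneg
          (s := univ) (f := fun i => |x i|) (fun i _ => abs_nonneg _)
  _ = ∑ i, |x i| := Real.sqrt_sq (Finset.sum_nonneg fun i _ => abs_nonneg _)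

open Classical in
lemma cross_bound {V : Type} [Fintype V] (G : SimpleGraph V) (c : ℝ) (hc : 0 ≤ c)
    (hexp : ∀ A : Finset V, (A.card : ℝ) ≤ (Fintype.card V : ℝ)/2 →
      c * A.card ≤ ((graphBoundary G A).card : ℝ))
    (A : Finset V) :
    c * ((A.card : ℝ) * ((Aᶜ : Finset V).card : ℝ)) ≤
      (Fintype.card V : ℝ) *
        ((Finset.univ.filter fun p : V × V => G.Adj p.1 p.2 ∧ p.1 ∈ A ∧ p.2 ∉ A).card : ℝ) := by
  set n := Fintype.card V with hn
  set E := Finset.univ.filter fun p : V × V => G.Adj p.1 p.2 ∧ p.1 ∈ A ∧ p.2 ∉ A with hE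
  have hcardA : (A.card : ℝ) + ((Aᶜ: Finset V).card : ℝ) = n := by
    have := Finset.card_add_card_compl A
    exact_mod_cast congrArg (Nat.cast : ℕ → ℝ) this
  have hAn : (A.card : ℝ) ≤ n := by
    have := Finset.card_le_card (Finset.subset_univ A); exact_mod_cast this
  have hBn : (((Aᶜ: Finset V).card : ℝ)) ≤ n := by
    have := Finset.card_le_card (Finset.subset_univ (Aᶜ)); exact_mod_cast this
  have hcA : 0 ≤ (A.card : ℝ) := Nat.cast_nonneg _
  have hcB : 0 ≤ (((Aᶜ: Finset V).card : ℝ)) := Nat.cast_nonneg _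
  have hcn : 0 ≤ (n : ℝ) := Nat.cast_nonneg _
  by_cases h : (A.card : ℝ) ≤ (n : ℝ)/2
  · have hbd : ((graphBoundary G A).card : ℝ) ≤ (E.card : ℝ) := by
      have : (graphBoundary G A).card ≤ E.card := by
        apply Finset.card_le_card_of_injOn
          (fun x => ((if h : ∃ a, a ∈ A ∧ G.Adj x a then h.choose else x), x))
        · intro x hx
          simp only [Finset.mem_coe, graphBoundary, mem_filter, mem_univ, true_and] at hx
          obtain ⟨hxA, a, haA, hadj⟩ := hx
          have hex : ∃ a, a ∈ A ∧ G.Adj x a := ⟨a, haA, hadj⟩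
          simp only [dif_pos hex]
          simp only [Finset.mem_coe, hE, mem_filter, mem_univ, true_and]
          exact ⟨(hex.choose_spec.2).symm, hex.choose_spec.1, hxA⟩
        · intro x _ y _ hxy
          exact congrArg Prod.snd hxy
      exact_mod_cast this
    have h1 := hexp A h
    calc c * ((A.card : ℝ) * ((Aᶜ: Finset V).card : ℝ)) ≤ (c * A.card) * n := by nlinarith [mul_nonneg hc hcA]
    _ ≤ ((graphBoundary G A).card : ℝ) * n := by nlinarith
    _ = (n:ℝ) * ((graphBoundary G A).card : ℝ) := mul_comm _ _
    _ ≤ (n : ℝ) * E.card := mul_le_mul_of_nonneg_left hbd hcn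
  · have h' : (((Aᶜ : Finset V).card : ℝ)) ≤ (n : ℝ)/2 := by linarith
    have hbd : ((graphBoundary G (Aᶜ)).card : ℝ) ≤ (E.card : ℝ) := by
      have : (graphBoundary G (Aᶜ)).card ≤ E.card := by
        apply Finset.card_le_card_of_injOn
          (fun x => (x, (if h : ∃ a, a ∈ (Aᶜ : Finset V) ∧ G.Adj x a then h.choose else x)))
        · intro x hx
          simp only [Finset.mem_coe, graphBoundary, mem_filter, mem_univ, true_and] at hx
          obtain ⟨hxA, a, haA, hadj⟩ := hx
          have hex : ∃ a, a ∈ (Aᶜ : Finset V) ∧ G.Adj x a := ⟨a, haA, hadj⟩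
          simp only [dif_pos hex]
          simp only [Finset.mem_coe, hE, mem_filter, mem_univ, true_and]
          refine ⟨hex.choose_spec.2, by simpa using hxA, by simpa using hex.choose_spec.1⟩
        · intro x _ y _ hxy
          exact congrArg Prod.fst hxy
      exact_mod_cast this
    have h1 := hexp (Aᶜ) h'
    calc c * ((A.card : ℝ) * ((Aᶜ: Finset V).card : ℝ)) ≤ (n : ℝ) * (c * ((Aᶜ: Finset V).card : ℝ)) := by
          nlinarith [mul_nonneg hc hcB]
    _ ≤ (n : ℝ) * ((graphBoundary G (Aᶜ)).card : ℝ) := mul_le_mul_of_nonneg_left h1 hcn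
    _ ≤ (n : ℝ) * E.card := mul_le_mul_of_nonneg_left hbd hcn

open Classical in
lemma indfn_eq {V : Type} [Fintype V] (φ : V → ℝ) (t : ℝ) (u v : V) :
    (Set.Ico (min (φ u) (φ v)) (max (φ u) (φ v))).indicator (fun _ => (1:ℝ)) t =
      (if φ u ≤ t ∧ ¬ φ v ≤ t then (1:ℝ) else 0) + (if φ v ≤ t ∧ ¬ φ u ≤ t then (1:ℝ) else 0) := by
  by_cases h1 : φ u ≤ t <;> by_cases h2 : φ v ≤ t
  · simp [Set.indicator_apply, Set.mem_Ico, h1, h2, not_lt.2 (max_le h1 h2)]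
  · simp [Set.indicator_apply, Set.mem_Ico, h1, h2, min_le_iff.mpr (Or.inl h1),
      lt_max_iff.mpr (Or.inr (not_le.mp h2))]
  · simp [Set.indicator_apply, Set.mem_Ico, h1, h2, min_le_iff.mpr (Or.inr h2),
      lt_max_iff.mpr (Or.inl (not_le.mp h1))]
  · simp [Set.indicator_apply, Set.mem_Ico, h1, h2,
      not_le.2 (lt_min (not_le.mp h1) (not_le.mp h2))]

open Classical in
lemma double_sum_ite_eq_card {V : Type} [Fintype V] (P : V → V → Prop) :
    ∑ u : V, ∑ v : V, (if P u v then (1:ℝ) else 0) =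
      ((Finset.univ.filter fun p : V × V => P p.1 p.2).card : ℝ) := by
  rw [← Finset.sum_boole]
  rw [← Finset.sum_product' (s := univ) (t := univ) (f := fun u v => if P u v then (1:ℝ) else 0)]
  congr 1

open Classical in
lemma pointwise_count {V : Type} [Fintype V] (G : SimpleGraph V) (c : ℝ) (hc : 0 ≤ c)
    (hexp : ∀ A : Finset V, (A.card : ℝ) ≤ (Fintype.card V : ℝ)/2 →
      c * A.card ≤ ((graphBoundary G A).card : ℝ))
    (φ : V → ℝ) (t : ℝ) :
    c * ∑ u : V, ∑ v : V,
        (Set.Ico (min (φ u) (φ v)) (max (φ u) (φ v))).indicator (fun _ => (1:ℝ)) t ≤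
      (Fintype.card V : ℝ) * ∑ u : V, ∑ v : V,
        (if G.Adj u v then
          (Set.Ico (min (φ u) (φ v)) (max (φ u) (φ v))).indicator (fun _ => (1:ℝ)) t else 0) := by
  set A : Finset V := Finset.univ.filter fun v => φ v ≤ t with hA
  have hmemA : ∀ v : V, v ∈ A ↔ φ v ≤ t := by intro v; simp [hA]
  have hmemA' : ∀ v : V, v ∈ (Aᶜ : Finset V) ↔ ¬ φ v ≤ t := by intro v; simp [hA]
  -- LHS rewrite
  have hL : ∑ u : V, ∑ v : V,
      (Set.Ico (min (φ u) (φ v)) (max (φ u) (φ v))).indicator (fun _ => (1:ℝ)) t =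
      2 * ((A.card : ℝ) * ((Aᶜ : Finset V).card : ℝ)) := by
    have e1 : ∀ u v : V, (Set.Ico (min (φ u) (φ v)) (max (φ u) (φ v))).indicator (fun _ => (1:ℝ)) t
        = (if u ∈ A ∧ v ∈ (Aᶜ: Finset V) then (1:ℝ) else 0)
          + (if v ∈ A ∧ u ∈ (Aᶜ: Finset V) then (1:ℝ) else 0) := by
      intro u v
      rw [indfn_eq]
      simp only [hmemA, hmemA']
    simp only [e1, Finset.sum_add_distrib]
    have swap : ∑ u : V, ∑ v : V, (if v ∈ A ∧ u ∈ (Aᶜ: Finset V) then (1:ℝ) else 0)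
        = ∑ u : V, ∑ v : V, (if u ∈ A ∧ v ∈ (Aᶜ: Finset V) then (1:ℝ) else 0) := by
      rw [Finset.sum_comm]
    rw [swap]
    have prod : ∑ u : V, ∑ v : V, (if u ∈ A ∧ v ∈ (Aᶜ: Finset V) then (1:ℝ) else 0)
        = (A.card : ℝ) * ((Aᶜ : Finset V).card : ℝ) := by
      have : ∀ u v : V, (if u ∈ A ∧ v ∈ (Aᶜ: Finset V) then (1:ℝ) else 0)
          = (if u ∈ A then (1:ℝ) else 0) * (if v ∈ (Aᶜ: Finset V) then (1:ℝ) else 0) := by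
        intro u v; by_cases h1 : u ∈ A <;> by_cases h2 : v ∈ (Aᶜ : Finset V) <;> simp [h1, h2]
      have s1 : ∀ (B : Finset V), ∑ u : V, (if u ∈ B then (1:ℝ) else 0) = B.card := by
        intro B
        rw [Finset.sum_ite_mem, Finset.univ_inter, Finset.sum_const, nsmul_eq_mul, mul_one]
      simp only [this, ← Finset.mul_sum, ← Finset.sum_mul]
      rw [s1 A, s1 (Aᶜ : Finset V)]
    rw [prod]; ring
  -- RHS rewrite
  have hR : ∑ u : V, ∑ v : V,
      (if G.Adj u v then
        (Set.Ico (min (φ u) (φ v)) (max (φ u) (φ v))).indicator (fun _ => (1:ℝ)) t else 0) =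
      2 * ((Finset.univ.filter fun p : V × V =>
          G.Adj p.1 p.2 ∧ p.1 ∈ A ∧ p.2 ∉ A).card : ℝ) := by
    have e1 : ∀ u v : V, (if G.Adj u v then
        (Set.Ico (min (φ u) (φ v)) (max (φ u) (φ v))).indicator (fun _ => (1:ℝ)) t else 0)
        = (if G.Adj u v ∧ u ∈ A ∧ v ∉ A then (1:ℝ) else 0)
          + (if G.Adj u v ∧ v ∈ A ∧ u ∉ A then (1:ℝ) else 0) := by
      intro u v
      by_cases h : G.Adj u v
      · rw [if_pos h, indfn_eq]
        simp only [hmemA, h, true_and]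
      · simp [h]
    simp only [e1, Finset.sum_add_distrib]
    have swap : ∑ u : V, ∑ v : V, (if G.Adj u v ∧ v ∈ A ∧ u ∉ A then (1:ℝ) else 0)
        = ∑ u : V, ∑ v : V, (if G.Adj u v ∧ u ∈ A ∧ v ∉ A then (1:ℝ) else 0) := by
      rw [Finset.sum_comm]
      apply Finset.sum_congr rfl; intro u _; apply Finset.sum_congr rfl; intro v _
      congr 1
      simp only [eq_iff_iff]
      constructor
      · rintro ⟨h1, h2, h3⟩; exact ⟨h1.symm, h2, h3⟩
      · rintro ⟨h1, h2, h3⟩; exact ⟨h1.symm, h2, h3⟩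
    rw [swap]
    have hd := double_sum_ite_eq_card (fun u v => G.Adj u v ∧ u ∈ A ∧ v ∉ A)
    rw [two_mul]
    congr 1 <;> (convert hd using 2 <;> congr!)
  rw [hL, hR]
  have := cross_bound G c hc hexp A
  nlinarith [this]

open Classical in
lemma l1_poincare {V : Type} [Fintype V] (G : SimpleGraph V) (c : ℝ) (hc : 0 ≤ c)
    (hexp : ∀ A : Finset V, (A.card : ℝ) ≤ (Fintype.card V : ℝ)/2 →
      c * A.card ≤ ((graphBoundary G A).card : ℝ))
    (φ : V → ℝ) :
    c * ∑ u : V, ∑ v : V, |φ u - φ v| ≤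
      (Fintype.card V : ℝ) * ∑ u : V, ∑ v : V, (if G.Adj u v then |φ u - φ v| else 0) := by
  set I : V → V → Set ℝ := fun u v => Set.Ico (min (φ u) (φ v)) (max (φ u) (φ v)) with hI
  have hint : ∀ u v : V, Integrable ((I u v).indicator fun _ => (1:ℝ)) := by
    intro u v
    rw [integrable_indicator_iff measurableSet_Ico]
    exact integrableOn_const measure_Ico_lt_top.ne
  have hval : ∀ u v : V, ∫ t, (I u v).indicator (fun _ => (1:ℝ)) t = |φ u - φ v| := by
    intro u v
    simp only [hI]
    show (∫ t, (Set.Ico (min (φ u) (φ v)) (max (φ u) (φ v))).indicator (1 : ℝ → ℝ) t) = |φ u - φ v|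
    rw [integral_indicator_one measurableSet_Ico, measureReal_def, Real.volume_Ico,
      ENNReal.toReal_ofReal (sub_nonneg.mpr min_le_max), max_sub_min_eq_abs]
    exact abs_sub_comm _ _
  have hint2 : ∀ u v : V, Integrable (fun t => if G.Adj u v then (I u v).indicator (fun _ => (1:ℝ)) t else 0) := by
    intro u v
    by_cases h : G.Adj u v
    · simpa [h] using hint u v
    · simp [h]
  have hval2 : ∀ u v : V, (∫ t, if G.Adj u v then (I u v).indicator (fun _ => (1:ℝ)) t else 0)
      = (if G.Adj u v then |φ u - φ v| else 0) := by
    intro u v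
    by_cases h : G.Adj u v
    · simp only [h, if_true]; exact hval u v
    · simp [h]
  have hintL : Integrable (fun t => c * ∑ u : V, ∑ v : V, (I u v).indicator (fun _ => (1:ℝ)) t) :=
    (integrable_finset_sum _ fun u _ => integrable_finset_sum _ fun v _ => hint u v).const_mul c
  have hintR : Integrable (fun t => (Fintype.card V : ℝ) *
      ∑ u : V, ∑ v : V, (if G.Adj u v then (I u v).indicator (fun _ => (1:ℝ)) t else 0)) :=
    (integrable_finset_sum _ fun u _ => integrable_finset_sum _ fun v _ => hint2 u v).const_mul _
  have hmono := integral_mono hintL hintR (fun t => pointwise_count G c hc hexp φ t)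
  have hLeq : (∫ t, c * ∑ u : V, ∑ v : V, (I u v).indicator (fun _ => (1:ℝ)) t)
      = c * ∑ u : V, ∑ v : V, |φ u - φ v| := by
    simp only [← smul_eq_mul]
    rw [integral_smul]
    congr 1
    rw [integral_finset_sum _ fun u _ => integrable_finset_sum _ fun v _ => hint u v]
    refine Finset.sum_congr rfl fun u _ => ?_
    rw [integral_finset_sum _ fun v _ => hint u v]
    exact Finset.sum_congr rfl fun v _ => hval u v
  have hReq : (∫ t, (Fintype.card V : ℝ) *
      ∑ u : V, ∑ v : V, (if G.Adj u v then (I u v).indicator (fun _ => (1:ℝ)) t else 0))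
      = (Fintype.card V : ℝ) * ∑ u : V, ∑ v : V, (if G.Adj u v then |φ u - φ v| else 0) := by
    simp only [← smul_eq_mul]
    rw [integral_smul]
    congr 1
    rw [integral_finset_sum _ fun u _ => integrable_finset_sum _ fun v _ => hint2 u v]
    refine Finset.sum_congr rfl fun u _ => ?_
    rw [integral_finset_sum _ fun v _ => hint2 u v]
    exact Finset.sum_congr rfl fun v _ => hval2 u v
  rw [hLeq, hReq] at hmono
  exact hmono

open Classical in
/-- Lemma 3 of the paper: let `(X, d)` be a metric space and `f : X × ℝ^N → ℝ^N` a
continuous map such that (1) `x ↦ f (x, w)` is `1`-Lipschitz for every `w`;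
(2) for every `x`, every continuous map `g : ℝ^N → ℝ^N` at finite uniform distance
from `w ↦ f (x, w)` attains the value `0`; and (3) there is a function `c'` such
that for every `r > 0` and every `w`, the set `{x : ‖f (x, w)‖ ≤ r}` has diameter
at most `c' r`. Then no expander admits a coarse quasi-embedding into `X`:
there is no expander `(X_n)` together with `1`-Lipschitz maps `ξ_n : X_n → X`
and a positive function `ρ` with `ρ(r,t)/t → 0` as `t → ∞` for every `r`, such
that `|ξ_n⁻¹(B_r(x))| < ρ(r, |X_n|)` for all `n`, `x ∈ X` and `r > 0`. -/
theorem no_expander_quasi_embeds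
    {X : Type*} [MetricSpace X] {N : ℕ}
    (f : X → EuclideanSpace ℝ (Fin N) → EuclideanSpace ℝ (Fin N))
    (hcont : Continuous fun q : X × EuclideanSpace ℝ (Fin N) => f q.1 q.2)
    (h1 : ∀ w : EuclideanSpace ℝ (Fin N), LipschitzWith 1 fun x => f x w)
    (h2 : ∀ (x : X) (g : EuclideanSpace ℝ (Fin N) → EuclideanSpace ℝ (Fin N)),
      Continuous g → (∃ C : ℝ, ∀ w, ‖g w - f x w‖ ≤ C) → ∃ w, g w = 0)
    (c' : ℝ → ℝ)
    (h3 : ∀ r : ℝ, 0 < r → ∀ (w : EuclideanSpace ℝ (Fin N)) (x x' : X),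
      ‖f x w‖ ≤ r → ‖f x' w‖ ≤ r → dist x x' ≤ c' r) :
    ¬ ∃ (d : ℕ) (c : ℝ) (_ : 0 < c) (E : Expander d c)
        (ξ : ∀ n : ℕ, E.V n → X)
        (_ : ∀ (n : ℕ) (x y : E.V n), dist (ξ n x) (ξ n y) ≤ ((E.G n).dist x y : ℝ))
        (ρ : ℝ → ℝ → ℝ),
        (∀ r t : ℝ, 0 < r → 0 < t → 0 < ρ r t) ∧
        (∀ r : ℝ, Filter.Tendsto (fun t : ℝ => ρ r t / t) Filter.atTop (nhds 0)) ∧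
        (∀ (n : ℕ) (x : X) (r : ℝ), 0 < r →
          ((Finset.univ.filter fun v : E.V n => dist (ξ n v) x < r).card : ℝ) <
            ρ r (Fintype.card (E.V n))) := by
  classical
  rintro ⟨d, c, hc, E, ξ, hLip, ρ, hρpos, hρlim, hρcount⟩
  -- constants
  set K : ℝ := (N : ℝ) * d / c with hK
  have hK0 : 0 ≤ K := by positivity
  set r₀ : ℝ := 2 * K + 1 with hr₀
  have hr₀pos : 0 < r₀ := by simp only [hr₀]; linarith
  set r : ℝ := c' r₀ + 1 with hr
  -- choose n large
  have hcast : Filter.Tendsto (fun k => ((Fintype.card (E.V k) : ℝ)))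
      Filter.atTop Filter.atTop :=
    tendsto_natCast_atTop_atTop.comp E.card_tendsto
  have hlim := (hρlim r).comp hcast
  have ev1 : ∀ᶠ k in Filter.atTop,
      ρ r (Fintype.card (E.V k)) / (Fintype.card (E.V k)) < 1/2 :=
    hlim.eventually_lt_const (by norm_num)
  have ev2 : ∀ᶠ k in Filter.atTop, (2:ℝ) ≤ (Fintype.card (E.V k) : ℝ) :=
    hcast.eventually_ge_atTop 2
  obtain ⟨n, hhalf, hm2⟩ := (ev1.and ev2).exists
  have hm0 : (0:ℝ) < (Fintype.card (E.V n) : ℝ) := by linarith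
  obtain ⟨v₀⟩ := (E.connected n).nonempty
  -- the averaged map
  set g : EuclideanSpace ℝ (Fin N) → EuclideanSpace ℝ (Fin N) :=
    fun w => ((Fintype.card (E.V n) : ℝ))⁻¹ • ∑ v : E.V n, f (ξ n v) w with hg
  have hgcont : Continuous g := by
    show Continuous ((((Fintype.card (E.V n) : ℝ))⁻¹) • fun w => ∑ v : E.V n, f (ξ n v) w)
    apply Continuous.const_smul
    apply continuous_finset_sum
    intro v _
    exact hcont.comp (Continuous.prodMk_right (ξ n v))
  have hfdist : ∀ (w : EuclideanSpace ℝ (Fin N)) (x y : X), ‖f x w - f y w‖ ≤ dist x y := by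
    intro w x y
    have := (h1 w).dist_le_mul x y
    rw [← dist_eq_norm]
    simpa using this
  have havg : ∀ (x : EuclideanSpace ℝ (Fin N)) (w : EuclideanSpace ℝ (Fin N)),
      x - g w = ((Fintype.card (E.V n) : ℝ))⁻¹ • ∑ v : E.V n, (x - f (ξ n v) w) := by
    intro x w
    rw [hg]
    rw [Finset.sum_sub_distrib, smul_sub]
    congr 1
    rw [Finset.sum_const, Finset.card_univ, ← Nat.cast_smul_eq_nsmul ℝ, smul_smul,
      inv_mul_cancel₀ hm0.ne', one_smul]
  have hgbound : ∀ w, ‖g w - f (ξ n v₀) w‖ ≤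
      ((Fintype.card (E.V n) : ℝ))⁻¹ * ∑ v : E.V n, (((E.G n).dist v v₀ : ℕ) : ℝ) := by
    intro w
    rw [norm_sub_rev, havg (f (ξ n v₀) w) w, norm_smul]
    rw [norm_inv, Real.norm_natCast]
    apply mul_le_mul_of_nonneg_left _ (inv_nonneg.mpr (Nat.cast_nonneg _))
    calc ‖∑ v : E.V n, (f (ξ n v₀) w - f (ξ n v) w)‖
        ≤ ∑ v : E.V n, ‖f (ξ n v₀) w - f (ξ n v) w‖ := norm_sum_le _ _
    _ ≤ ∑ v : E.V n, (((E.G n).dist v v₀ : ℕ) : ℝ) := by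
        apply Finset.sum_le_sum
        intro v _
        calc ‖f (ξ n v₀) w - f (ξ n v) w‖ ≤ dist (ξ n v₀) (ξ n v) := hfdist w _ _
        _ = dist (ξ n v) (ξ n v₀) := dist_comm _ _
        _ ≤ (((E.G n).dist v v₀ : ℕ) : ℝ) := hLip n v v₀
  obtain ⟨ws, hws⟩ := h2 (ξ n v₀) g hgcont ⟨_, hgbound⟩
  set F : E.V n → EuclideanSpace ℝ (Fin N) := fun v => f (ξ n v) ws with hF
  have hFedge : ∀ u v : E.V n, (E.G n).Adj u v → ‖F u - F v‖ ≤ 1 := by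
    intro u v huv
    have hd2 : (E.G n).dist u v ≤ 1 := by
      have := SimpleGraph.dist_le (SimpleGraph.Walk.cons huv SimpleGraph.Walk.nil)
      simpa using this
    calc ‖F u - F v‖ ≤ dist (ξ n u) (ξ n v) := hfdist ws _ _
    _ ≤ (((E.G n).dist u v : ℕ) : ℝ) := hLip n u v
    _ ≤ 1 := by exact_mod_cast hd2
  -- degree count
  have hdeg : ∀ u : E.V n, ∑ v : E.V n, (if (E.G n).Adj u v then (1:ℝ) else 0) = d := by
    intro u
    rw [Finset.sum_boole]
    have hreg := E.regular n u
    unfold gdeg at hreg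
    first
      | (norm_cast; convert hreg using 2; congr!)
      | norm_cast
      | (convert congrArg (Nat.cast : ℕ → ℝ) hreg using 2; congr!)
  -- per-coordinate Poincaré
  have hcoord : ∀ i : Fin N, ∑ u : E.V n, ∑ v : E.V n, |F u i - F v i| ≤
      (Fintype.card (E.V n) : ℝ) * (Fintype.card (E.V n) : ℝ) * d / c := by
    intro i
    have hpoin := l1_poincare (E.G n) c hc.le (E.expansion n) (fun v => F v i)
    have hRHS : ∑ u : E.V n, ∑ v : E.V n, (if (E.G n).Adj u v then |F u i - F v i| else 0) ≤
        (Fintype.card (E.V n) : ℝ) * d := by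
      calc ∑ u : E.V n, ∑ v : E.V n, (if (E.G n).Adj u v then |F u i - F v i| else 0)
          ≤ ∑ u : E.V n, ∑ v : E.V n, (if (E.G n).Adj u v then (1:ℝ) else 0) := by
            apply Finset.sum_le_sum; intro u _
            apply Finset.sum_le_sum; intro v _
            by_cases h : (E.G n).Adj u v
            · simp only [h, if_true]
              calc |F u i - F v i| = |(F u - F v) i| := by simp [PiLp.sub_apply]
              _ ≤ ‖F u - F v‖ := euclid_abs_coord_le _ _
              _ ≤ 1 := hFedge u v h
            · simp [h]
      _ = ∑ u : E.V n, (d : ℝ) := by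
            exact Finset.sum_congr rfl fun u _ => hdeg u
      _ = (Fintype.card (E.V n) : ℝ) * d := by
            rw [Finset.sum_const, Finset.card_univ, nsmul_eq_mul]
    have hc0 : (0:ℝ) < c := hc
    rw [le_div_iff₀ hc0]
    nlinarith [hpoin, mul_le_mul_of_nonneg_left hRHS hm0.le]
  -- total pairwise sum
  have hPtotal : ∑ u : E.V n, ∑ v : E.V n, ‖F u - F v‖ ≤
      K * (Fintype.card (E.V n) : ℝ) * (Fintype.card (E.V n) : ℝ) := by
    calc ∑ u : E.V n, ∑ v : E.V n, ‖F u - F v‖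
        ≤ ∑ u : E.V n, ∑ v : E.V n, ∑ i : Fin N, |F u i - F v i| := by
          apply Finset.sum_le_sum; intro u _
          apply Finset.sum_le_sum; intro v _
          calc ‖F u - F v‖ ≤ ∑ i : Fin N, |(F u - F v) i| := euclid_norm_le_sum_abs _
          _ = ∑ i : Fin N, |F u i - F v i| := by
              apply Finset.sum_congr rfl; intro i _
              simp [PiLp.sub_apply]
    _ = ∑ u : E.V n, ∑ i : Fin N, ∑ v : E.V n, |F u i - F v i| := by
          exact Finset.sum_congr rfl fun u _ => Finset.sum_comm
    _ = ∑ i : Fin N, ∑ u : E.V n, ∑ v : E.V n, |F u i - F v i| := Finset.sum_comm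
    _ ≤ ∑ i : Fin N, (Fintype.card (E.V n) : ℝ) * (Fintype.card (E.V n) : ℝ) * d / c := by
          exact Finset.sum_le_sum fun i _ => hcoord i
    _ = (N:ℝ) * ((Fintype.card (E.V n) : ℝ) * (Fintype.card (E.V n) : ℝ) * d / c) := by
          rw [Finset.sum_const, Finset.card_univ, Fintype.card_fin, nsmul_eq_mul]
    _ = K * (Fintype.card (E.V n) : ℝ) * (Fintype.card (E.V n) : ℝ) := by
          rw [hK]; field_simp
  -- deviation bound
  have hdev : ∑ u : E.V n, ‖F u‖ ≤ K * (Fintype.card (E.V n) : ℝ) := by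
    have him : ∀ u : E.V n, ‖F u‖ ≤
        ((Fintype.card (E.V n) : ℝ))⁻¹ * ∑ v : E.V n, ‖F u - F v‖ := by
      intro u
      calc ‖F u‖ = ‖F u - g ws‖ := by rw [hws, sub_zero]
      _ = ‖((Fintype.card (E.V n) : ℝ))⁻¹ • ∑ v : E.V n, (F u - f (ξ n v) ws)‖ := by
          rw [havg]
      _ = ((Fintype.card (E.V n) : ℝ))⁻¹ * ‖∑ v : E.V n, (F u - F v)‖ := by
          rw [norm_smul, norm_inv, Real.norm_natCast]
      _ ≤ ((Fintype.card (E.V n) : ℝ))⁻¹ * ∑ v : E.V n, ‖F u - F v‖ :=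
          mul_le_mul_of_nonneg_left (norm_sum_le _ _) (inv_nonneg.mpr (Nat.cast_nonneg _))
    calc ∑ u : E.V n, ‖F u‖
        ≤ ∑ u : E.V n, ((Fintype.card (E.V n) : ℝ))⁻¹ * ∑ v : E.V n, ‖F u - F v‖ :=
          Finset.sum_le_sum fun u _ => him u
    _ = ((Fintype.card (E.V n) : ℝ))⁻¹ * ∑ u : E.V n, ∑ v : E.V n, ‖F u - F v‖ := by
          rw [Finset.mul_sum]
    _ ≤ ((Fintype.card (E.V n) : ℝ))⁻¹ *
          (K * (Fintype.card (E.V n) : ℝ) * (Fintype.card (E.V n) : ℝ)) :=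
          mul_le_mul_of_nonneg_left hPtotal (inv_nonneg.mpr (Nat.cast_nonneg _))
    _ = K * (Fintype.card (E.V n) : ℝ) := by
          first
            | (field_simp; ring)
            | field_simp
  -- Markov
  set S : Finset (E.V n) := Finset.univ.filter (fun u => ‖F u‖ ≤ r₀) with hS
  have hScompl : ((Fintype.card (E.V n) : ℝ) - S.card) * r₀ ≤
      K * (Fintype.card (E.V n) : ℝ) := by
    have h1' : ∑ u ∈ Sᶜ, ‖F u‖ ≤ ∑ u : E.V n, ‖F u‖ :=
      Finset.sum_le_sum_of_subset_of_nonneg (Finset.subset_univ _)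
        (fun u _ _ => norm_nonneg _)
    have h2' : ((Sᶜ : Finset (E.V n)).card : ℝ) * r₀ ≤ ∑ u ∈ Sᶜ, ‖F u‖ := by
      have hsum : ∑ u ∈ (Sᶜ : Finset (E.V n)), r₀ ≤ ∑ u ∈ Sᶜ, ‖F u‖ := by
        apply Finset.sum_le_sum
        intro u hu
        have hu' : u ∉ S := Finset.mem_compl.mp hu
        have hnot : ¬ ‖F u‖ ≤ r₀ := fun hcon =>
          hu' (Finset.mem_filter.mpr ⟨Finset.mem_univ u, hcon⟩)
        linarith [not_le.mp hnot]
      simpa [Finset.sum_const, nsmul_eq_mul] using hsum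
    have h3' : ((Sᶜ : Finset (E.V n)).card : ℝ) =
        (Fintype.card (E.V n) : ℝ) - S.card := by
      rw [Finset.card_compl]
      rw [Nat.cast_sub (Finset.card_le_univ S)]
    rw [h3'] at h2'
    linarith
  have hShalf : (Fintype.card (E.V n) : ℝ) / 2 ≤ S.card := by
    have hScard : (S.card : ℝ) ≤ (Fintype.card (E.V n) : ℝ) := by
      exact_mod_cast Finset.card_le_univ S
    nlinarith [hScompl, hK0, hm0]
  have hSne : S.Nonempty := by
    rw [← Finset.card_pos]
    have : (0:ℝ) < S.card := by linarith
    exact_mod_cast this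
  obtain ⟨u₁, hu₁⟩ := hSne
  have hu₁n : ‖f (ξ n u₁) ws‖ ≤ r₀ := by
    have := Finset.mem_filter.mp hu₁
    exact this.2
  have hc'0 : 0 ≤ c' r₀ := by
    have := h3 r₀ hr₀pos ws (ξ n u₁) (ξ n u₁) hu₁n hu₁n
    simpa [dist_self] using this
  have hrpos : 0 < r := by rw [hr]; linarith
  have hsubset : S ⊆ Finset.univ.filter (fun v => dist (ξ n v) (ξ n u₁) < r) := by
    intro u hu
    have hun : ‖f (ξ n u) ws‖ ≤ r₀ := (Finset.mem_filter.mp hu).2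
    have := h3 r₀ hr₀pos ws (ξ n u) (ξ n u₁) hun hu₁n
    simp only [Finset.mem_filter, Finset.mem_univ, true_and]
    rw [hr]; linarith
  have hcount := hρcount n (ξ n u₁) r hrpos
  have hcard : (S.card : ℝ) ≤
      ((Finset.univ.filter fun v : E.V n => dist (ξ n v) (ξ n u₁) < r).card : ℝ) := by
    exact_mod_cast Finset.card_le_card hsubset
  have hρsmall : ρ r (Fintype.card (E.V n)) < (Fintype.card (E.V n) : ℝ) / 2 := by
    rw [div_lt_iff₀ hm0] at hhalf
    linarith
  linarith
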